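/- Let q ∈ ℂ \ {0} with |q| ≠ 1. The polynomials a(z) = [z-1]_q^2 = (z-1)(z-q), b(z) = -[z+1]_q^2 = -(z+1)(z+q), and c(z) = -2(q+1)z satisfy a + b = c, and moreover max{deg a, deg b, deg c} = 2 while rad_q(abc) = z(z-1)(z+1) has degree 3, so the Stothers–Mason bound max{deg a, deg b, deg c} ≤ deg(rad_q(abc)) - 1 is attained with equality. -/

import Mathlib

open Polynomial

noncomputable section

/-- q-number [n]_q = 1 + q + ... + q^{n-1}. -/
def qNum (q : ℂ) (n : ℕ) : ℂ := ∑ i ∈ Finset.range n, q ^ i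

/-- q-factorial. -/
def qFact (q : ℂ) (n : ℕ) : ℂ := ∏ i ∈ Finset.range n, qNum q (i + 1)

/-- q-binomial coefficient. -/
def qBinom (q : ℂ) (k j : ℕ) : ℂ := qFact q k / (qFact q j * qFact q (k - j))

/-- q-derivative of a function. -/
def Dqf (q : ℂ) (f : ℂ → ℂ) : ℂ → ℂ := fun z => (f (q * z) - f z) / (q * z - z)

/-- q-analogue of the power (z-w)^n : [z-w]_q^n = (z-w)(z-qw)...(z-q^{n-1}w). -/
def qPow (q w : ℂ) (n : ℕ) : Polynomial ℂ := ∏ i ∈ Finset.range n, (X - C (q ^ i * w))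

/-- q-derivative as a polynomial operation. -/
def qDeriv (q : ℂ) (f : Polynomial ℂ) : Polynomial ℂ :=
  C (q - 1)⁻¹ * ((f.comp (C q * X) - f) /ₘ X)

/-- `w` is a zero of `f` with q-weight `n`. -/
def IsZeroQWeight (q : ℂ) (f : Polynomial ℂ) (w : ℂ) (n : ℕ) : Prop :=
  (w = 0 ∧ f ≠ 0 ∧ Polynomial.rootMultiplicity 0 f = n) ∨
  (w ≠ 0 ∧ (∀ k < n, f.eval (q ^ k * w) = 0) ∧ f.eval (q ^ n * w) ≠ 0)

/-- Canonical q-chain factorization of a polynomial. -/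
structure QFactorization (q : ℂ) (P : Polynomial ℂ) where
  N : ℕ
  z : Fin N → ℂ
  n : Fin N → ℕ
  A : ℂ
  A_ne : A ≠ 0
  n_pos : ∀ j, 1 ≤ n j
  eq : P = Polynomial.C A * ∏ j, qPow q (z j) (n j)
  deg_sum : ∑ j, n j = P.natDegree
  chain : ∀ j : Fin N,
    IsZeroQWeight q (∏ k ∈ Finset.univ.filter (fun k => j ≤ k), qPow q (z k) (n k)) (z j) (n j)
  maximal : ∀ j : Fin N, z j ≠ 0 →
    (∏ k ∈ Finset.univ.filter (fun k => j ≤ k), qPow q (z k) (n k)).eval (q⁻¹ * z j) ≠ 0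

/-- q-difference radical associated to a canonical factorization. -/
def radQ {q : ℂ} {P : Polynomial ℂ} (F : QFactorization q P) : Polynomial ℂ :=
  ∏ j, (X - C (F.z j))

local instance : DecidableEq (Polynomial ℂ) := Classical.decEq _

/-- Truncated q-radical of level μ. -/
def radTruncQ {q : ℂ} {P : Polynomial ℂ} (F : QFactorization q P) (μ : ℕ) : Polynomial ℂ :=
  EuclideanDomain.gcd (∏ j, qPow q (F.z j) (F.n j)) (∏ j, qPow q (F.z j) μ)

/-- f and g have a nonconstant common q-divisor. -/
def HasCommonQDivisor (q : ℂ) (f g : Polynomial ℂ) : Prop :=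
  ∃ (z₀ z₁ z₂ : ℂ) (m n : ℕ) (F G : Polynomial ℂ), 1 ≤ m ∧ 1 ≤ n ∧
    f = qPow q z₁ m * F ∧ g = qPow q z₂ n * G ∧ (z₀ = z₁ ∨ z₀ = z₂) ∧
    f * g = qPow q z₀ (m + n) * (F * G)

/-- q-shifted power [P]_q^n(z) = P(z)P(qz)...(P(q^{n-1}z)). -/
def qShiftPow (q : ℂ) (P : Polynomial ℂ) (n : ℕ) : Polynomial ℂ :=
  ∏ i ∈ Finset.range n, P.comp (C (q ^ i) * X)

/-- gcd of a list of polynomials. -/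
def gcdList (l : List (Polynomial ℂ)) : Polynomial ℂ := l.foldr EuclideanDomain.gcd 0
lemma qpow_ne {q : ℂ} (hq0 : q ≠ 0) (habs : ‖q‖ ≠ 1) {n : ℕ} (hn : n ≠ 0) {c : ℂ}
    (hc : ‖c‖ = 1) : q ^ n ≠ c := by
  intro h
  apply habs
  have h2 : ‖q‖ ^ n = (1 : ℝ) ^ n := by
    rw [← norm_pow, h, hc, one_pow]
  exact (pow_left_inj₀ (norm_nonneg q) zero_le_one hn).mp h2

lemma radQ_mk {q : ℂ} {P : Polynomial ℂ} (N : ℕ) (z : Fin N → ℂ) (n : Fin N → ℕ) (A : ℂ)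
    (h1 : A ≠ 0) (h2 : ∀ j, 1 ≤ n j) (h3 : P = Polynomial.C A * ∏ j, qPow q (z j) (n j))
    (h4 : ∑ j, n j = P.natDegree)
    (h5 : ∀ j : Fin N,
      IsZeroQWeight q (∏ k ∈ Finset.univ.filter (fun k => j ≤ k), qPow q (z k) (n k)) (z j) (n j))
    (h6 : ∀ j : Fin N, z j ≠ 0 →
      (∏ k ∈ Finset.univ.filter (fun k => j ≤ k), qPow q (z k) (n k)).eval (q⁻¹ * z j) ≠ 0) :
    radQ (⟨N, z, n, A, h1, h2, h3, h4, h5, h6⟩ : QFactorization q P) = ∏ j, (X - C (z j)) :=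
  rfl

/-- Sharpness example for the q-difference Stothers–Mason theorem. -/
theorem q_mason_sharp (q : ℂ) (hq0 : q ≠ 0) (habs : ‖q‖ ≠ 1) :
    let a : Polynomial ℂ := (X - 1) * (X - C q)
    let b : Polynomial ℂ := -((X + 1) * (X + C q))
    let c : Polynomial ℂ := -(C (2 * (q + 1)) * X)
    a + b = c ∧ max (max a.natDegree b.natDegree) c.natDegree = 2 ∧
      ∃ F : QFactorization q (a * b * c),
        radQ F = X * (X - 1) * (X + 1) ∧ (radQ F).natDegree = 3 := by
  intro a b c
  -- basic nonvanishing facts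
  have hq1 : q ≠ 1 := by
    simpa using qpow_ne hq0 habs one_ne_zero (c := 1) (by simp)
  have hqm1 : q ≠ -1 := by
    simpa using qpow_ne hq0 habs one_ne_zero (c := -1) (by simp)
  have hq21 : q ^ 2 ≠ 1 := qpow_ne hq0 habs two_ne_zero (by simp)
  have hq2m1 : q ^ 2 ≠ -1 := qpow_ne hq0 habs two_ne_zero (by simp)
  have hqinv1 : q⁻¹ ≠ 1 := by
    intro h; exact hq1 (by field_simp at h; simp [h])
  have hqinvm1 : q⁻¹ ≠ -1 := by
    intro h
    apply hqm1
    have := congrArg (q * ·) h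
    simp [mul_inv_cancel₀ hq0] at this
    linear_combination this
  have hq1' : q + 1 ≠ 0 := fun h => hqm1 (by linear_combination h)
  have hA : (2 : ℂ) * (q + 1) ≠ 0 := by
    exact mul_ne_zero two_ne_zero hq1'
  refine ⟨?_, ?_, ?_⟩
  · show (X - 1) * (X - C q) + -((X + 1) * (X + C q)) = -(C (2 * (q + 1)) * X)
    simp only [map_mul, map_add, map_ofNat, map_one]
    ring
  · have ha : a.natDegree = 2 := by
      show ((X - 1) * (X - C q)).natDegree = 2
      compute_degree!
    have hb : b.natDegree = 2 := by
      show (-((X + 1) * (X + C q))).natDegree = 2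
      rw [natDegree_neg]; compute_degree!
    have hc : c.natDegree = 1 := by
      show (-(C (2 * (q + 1)) * X)).natDegree = 1
      rw [natDegree_neg]; compute_degree!
    rw [ha, hb, hc]; rfl
  · have hP0 : qPow q 0 1 = X := by simp [qPow]
    have hP1 : qPow q 1 2 = (X - 1) * (X - C q) := by
      simp [qPow, Finset.prod_range_succ]
    have hPm1 : qPow q (-1) 2 = (X + 1) * (X + C q) := by
      simp [qPow, Finset.prod_range_succ, sub_neg_eq_add]
    have hf1 : (Finset.univ.filter (fun k => (1 : Fin 3) ≤ k)) = {1, 2} := by decide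
    have hf2 : (Finset.univ.filter (fun k => (2 : Fin 3) ≤ k)) = {2} := by decide
    have hf0 : (Finset.univ.filter (fun k => (0 : Fin 3) ≤ k)) = Finset.univ := by decide
    have hX1 : (X - 1 : ℂ[X]) ≠ 0 := by
      have := X_sub_C_ne_zero (1 : ℂ); simpa using this
    have hXq : (X - C q : ℂ[X]) ≠ 0 := X_sub_C_ne_zero q
    have hXp1 : (X + 1 : ℂ[X]) ≠ 0 := by
      have := X_sub_C_ne_zero (-1 : ℂ); simpa [sub_neg_eq_add] using this
    have hXpq : (X + C q : ℂ[X]) ≠ 0 := by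
      have := X_sub_C_ne_zero (-q : ℂ); simpa [sub_neg_eq_add] using this
    refine ⟨⟨3, ![0, 1, -1], ![1, 2, 2], 2 * (q + 1), hA, ?_, ?_, ?_, ?_, ?_⟩, ?_, ?_⟩
    · intro j; fin_cases j <;> simp
    · -- eq
      show a * b * c = _
      rw [Fin.prod_univ_three]
      simp only [Matrix.cons_val_zero, Matrix.cons_val_one, Matrix.head_cons,
        Matrix.cons_val_two, Matrix.tail_cons]
      rw [hP0, hP1, hPm1]
      show (X - 1) * (X - C q) * -((X + 1) * (X + C q)) * -(C (2 * (q + 1)) * X) = _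
      simp only [map_mul, map_add, map_ofNat, map_one]
      ring
    · -- deg_sum
      have hane : a ≠ 0 := mul_ne_zero hX1 hXq
      have hbne : b ≠ 0 := neg_ne_zero.mpr (mul_ne_zero hXp1 hXpq)
      have hcne : c ≠ 0 := by
        show -(C (2 * (q + 1)) * X) ≠ 0
        exact neg_ne_zero.mpr (mul_ne_zero (C_ne_zero.mpr hA) X_ne_zero)
      rw [Fin.sum_univ_three, natDegree_mul (mul_ne_zero hane hbne) hcne,
        natDegree_mul hane hbne]
      have hda : a.natDegree = 2 := by
        show ((X - 1) * (X - C q)).natDegree = 2; compute_degree!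
      have hdb : b.natDegree = 2 := by
        show (-((X + 1) * (X + C q))).natDegree = 2
        rw [natDegree_neg]; compute_degree!
      have hdc : c.natDegree = 1 := by
        show (-(C (2 * (q + 1)) * X)).natDegree = 1
        rw [natDegree_neg]; compute_degree!
      rw [hda, hdb, hdc]
      simp
    · -- chain
      intro j
      fin_cases j
      · simp only [Fin.isValue, Fin.zero_eta, hf0]
        rw [Fin.prod_univ_three]
        simp only [Matrix.cons_val_zero, Matrix.cons_val_one, Matrix.head_cons,
          Matrix.cons_val_two, Matrix.tail_cons]
        rw [hP0, hP1, hPm1]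
        refine Or.inl ⟨rfl, ?_, ?_⟩
        · exact mul_ne_zero (mul_ne_zero X_ne_zero (mul_ne_zero hX1 hXq))
            (mul_ne_zero hXp1 hXpq)
        · have h1 : ¬ IsRoot ((X - 1) * (X - C q)) 0 := by
            simp [IsRoot, hq0]
          have h2 : ¬ IsRoot ((X + 1) * (X + C q)) 0 := by
            simp [IsRoot, hq0]
          rw [rootMultiplicity_mul (mul_ne_zero (mul_ne_zero X_ne_zero
              (mul_ne_zero hX1 hXq)) (mul_ne_zero hXp1 hXpq)),
            rootMultiplicity_mul (mul_ne_zero X_ne_zero (mul_ne_zero hX1 hXq)),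
            rootMultiplicity_eq_zero h1, rootMultiplicity_eq_zero h2]
          have hx : Polynomial.rootMultiplicity (0:ℂ) X = 1 := by
            have := rootMultiplicity_X_sub_C_self (x := (0:ℂ))
            simpa using this
          rw [hx]
      · simp only [Fin.isValue, Fin.mk_one, hf1]
        rw [Finset.prod_insert (by decide), Finset.prod_singleton]
        simp only [Matrix.cons_val_one, Matrix.head_cons, Matrix.cons_val_two,
          Matrix.tail_cons, Matrix.cons_val_zero]
        rw [hP1, hPm1]
        refine Or.inr ⟨one_ne_zero, ?_, ?_⟩
        · intro k hk
          interval_cases k <;> simp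
        · simp only [mul_one, eval_mul, eval_sub, eval_add, eval_pow, eval_X, eval_C, eval_one]
          refine mul_ne_zero (mul_ne_zero ?_ ?_) (mul_ne_zero ?_ ?_)
          · exact sub_ne_zero.mpr hq21
          · intro h
            have h2 : q * (q - 1) = 0 := by linear_combination h
            rcases mul_eq_zero.mp h2 with h'|h'
            · exact hq0 h'
            · exact hq1 (by linear_combination h')
          · intro h
            exact hq2m1 (by linear_combination h)
          · intro h
            have h2 : q * (q + 1) = 0 := by linear_combination h
            rcases mul_eq_zero.mp h2 with h'|h'
            · exact hq0 h'
            · exact hq1' h'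
      · simp only [Fin.isValue, Fin.reduceFinMk, hf2]
        rw [Finset.prod_singleton]
        simp only [Matrix.cons_val_two, Matrix.tail_cons, Matrix.head_cons]
        rw [hPm1]
        refine Or.inr ⟨by norm_num, ?_, ?_⟩
        · intro k hk
          interval_cases k <;> simp
        · simp only [eval_mul, eval_add, eval_pow, eval_X, eval_C, eval_one]
          refine mul_ne_zero ?_ ?_
          · intro h
            exact hq21 (by linear_combination -h)
          · intro h
            have h2 : q * (q - 1) = 0 := by linear_combination -h
            rcases mul_eq_zero.mp h2 with h'|h'
            · exact hq0 h'
            · exact hq1 (by linear_combination h')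
    · -- maximal
      intro j hj
      fin_cases j
      · simp at hj
      · simp only [Fin.isValue, Fin.mk_one, hf1]
        rw [Finset.prod_insert (by decide), Finset.prod_singleton]
        simp only [Matrix.cons_val_one, Matrix.head_cons, Matrix.cons_val_two,
          Matrix.tail_cons, Matrix.cons_val_zero]
        rw [hP1, hPm1]
        simp only [mul_one, eval_mul, eval_sub, eval_add, eval_X, eval_C, eval_one]
        refine mul_ne_zero (mul_ne_zero ?_ ?_) (mul_ne_zero ?_ ?_)
        · exact sub_ne_zero.mpr hqinv1
        · intro h
          apply hq21
          have h2 : q * q⁻¹ - q * q = 0 := by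
            have := congrArg (q * ·) (sub_eq_zero.mp h)
            simpa [mul_sub] using by linear_combination this
          rw [mul_inv_cancel₀ hq0] at h2
          linear_combination -h2
        · intro h
          exact hqinvm1 (by linear_combination h)
        · intro h
          apply hq2m1
          have h2 : q * q⁻¹ + q * q = 0 := by
            have := congrArg (q * ·) h
            simpa [mul_add] using this
          rw [mul_inv_cancel₀ hq0] at h2
          linear_combination h2
      · simp only [Fin.isValue, Fin.reduceFinMk, hf2]
        rw [Finset.prod_singleton]
        simp only [Matrix.cons_val_two, Matrix.tail_cons, Matrix.head_cons]
        rw [hPm1]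
        simp only [eval_mul, eval_add, eval_X, eval_C, eval_one, mul_neg, mul_one]
        refine mul_ne_zero ?_ ?_
        · intro h
          exact hqinv1 (by linear_combination -h)
        · intro h
          apply hq21
          have h2 : -(q * q⁻¹) + q * q = 0 := by
            have := congrArg (q * ·) h
            simpa [mul_add] using this
          rw [mul_inv_cancel₀ hq0] at h2
          linear_combination h2
    · -- radQ value
      rw [radQ_mk, Fin.prod_univ_three]
      simp only [Matrix.cons_val_zero, Matrix.cons_val_one, Matrix.head_cons,
        Matrix.cons_val_two, Matrix.tail_cons, map_zero, map_one, map_neg, sub_zero,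
        sub_neg_eq_add]
    · -- radQ degree
      rw [radQ_mk, Fin.prod_univ_three]
      simp only [Matrix.cons_val_zero, Matrix.cons_val_one, Matrix.head_cons,
        Matrix.cons_val_two, Matrix.tail_cons, map_zero, map_one, map_neg, sub_zero,
        sub_neg_eq_add]
      compute_degree!
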